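/- arXiv:1504.06729 — 2 statements merged into one kernel-verified Lean document; each statement's English description precedes it below -/
import Mathlib

section
/- Let A ∈ R^{m×n} (m ≤ n), let N ∈ R^{m×n} with ‖N‖_2 ≤ δ, and B = A + N. Then for any k < m, the Frobenius norm of B minus its best rank-k approximation satisfies ‖B − B_k‖_F ≤ ‖A − A_k‖_F + √((m−k)δ^2) + √(2 σ_1(A) (m−k) δ). In particular, if δ ≤ ε^2 ‖A−A_k‖_F^2 / (2 σ_1(A) (m−k)) and √((m−k)) δ ≤ ε‖A−A_k‖_F, then ‖B − B_k‖_F ≤ (1+2ε)‖A − A_k‖_F. -/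
open Matrix

/-- Spectral (operator) norm of a real matrix. -/
noncomputable def specNorm {m n : ℕ} (A : Matrix (Fin m) (Fin n) ℝ) : ℝ :=
  ‖LinearMap.toContinuousLinearMap (Matrix.toEuclideanLin A)‖

/-- Best rank-`k` approximation error `‖A - A_k‖_F` in Frobenius norm. -/
noncomputable def bestErr {m n : ℕ} (A : Matrix (Fin m) (Fin n) ℝ) (k : ℕ) : ℝ :=
  sInf {e : ℝ | ∃ B : Matrix (Fin m) (Fin n) ℝ, B.rank ≤ k ∧
    e = Real.sqrt (∑ i, ∑ j, ((A - B) i j) ^ 2)}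

namespace StmtAux

noncomputable def ev {p : ℕ} (x : Fin p → ℝ) : EuclideanSpace ℝ (Fin p) :=
  (WithLp.equiv 2 (Fin p → ℝ)).symm x

lemma ev_apply {p : ℕ} (x : Fin p → ℝ) (i : Fin p) : ev x i = x i := rfl

lemma norm_ev {p : ℕ} (x : Fin p → ℝ) : ‖ev x‖ = Real.sqrt (∑ i, (x i) ^ 2) := by
  rw [EuclideanSpace.norm_eq]
  simp [ev_apply, sq_abs]

lemma inner_ev {p : ℕ} (x y : Fin p → ℝ) : inner (𝕜 := ℝ) (ev x) (ev y) = ∑ i, x i * y i := by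
  simp [PiLp.inner_apply, RCLike.inner_apply, ev_apply]
  exact Finset.sum_congr rfl fun _ _ => mul_comm _ _

/-- operator norm bound in coordinates -/
lemma mulVec_bound {m n : ℕ} (N : Matrix (Fin m) (Fin n) ℝ) (δ : ℝ) (hN : specNorm N ≤ δ)
    (x : Fin n → ℝ) :
    Real.sqrt (∑ i, (N.mulVec x i) ^ 2) ≤ δ * Real.sqrt (∑ j, (x j) ^ 2) := by
  have h1 : ‖LinearMap.toContinuousLinearMap (Matrix.toEuclideanLin N) (ev x)‖ ≤
      ‖LinearMap.toContinuousLinearMap (Matrix.toEuclideanLin N)‖ * ‖ev x‖ :=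
    ContinuousLinearMap.le_opNorm _ _
  have h2 : LinearMap.toContinuousLinearMap (Matrix.toEuclideanLin N) (ev x) =
      ev (N.mulVec x) := rfl
  rw [h2, norm_ev, norm_ev] at h1
  refine h1.trans ?_
  exact mul_le_mul_of_nonneg_right hN (Real.sqrt_nonneg _)

end StmtAux

namespace StmtAux

/-- `‖Nᵀ u‖² ≤ δ² ‖u‖²`. -/
lemma vecMul_bound {m n : ℕ} (N : Matrix (Fin m) (Fin n) ℝ) (δ : ℝ) (hδ0 : 0 ≤ δ)
    (hN : specNorm N ≤ δ) (u : Fin m → ℝ) :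
    ∑ j, (∑ i, u i * N i j) ^ 2 ≤ δ ^ 2 * ∑ i, (u i) ^ 2 := by
  set w : Fin n → ℝ := fun j => ∑ i, u i * N i j with hw
  have hS : ∑ j, (w j) ^ 2 = ∑ i, u i * (N.mulVec w i) := by
    have h1 : ∀ j, (w j) ^ 2 = ∑ i, w j * (u i * N i j) := by
      intro j
      rw [sq, hw]
      simp only [Finset.mul_sum]
    rw [Finset.sum_congr rfl fun j _ => h1 j, Finset.sum_comm]
    refine Finset.sum_congr rfl fun i _ => ?_
    simp only [Matrix.mulVec, dotProduct, Finset.mul_sum]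
    exact Finset.sum_congr rfl fun j _ => by ring
  have hCS : ∑ i, u i * (N.mulVec w i) ≤
      Real.sqrt (∑ i, (u i)^2) * Real.sqrt (∑ i, (N.mulVec w i)^2) := by
    have := real_inner_le_norm (ev u) (ev (N.mulVec w))
    rwa [inner_ev, norm_ev, norm_ev] at this
  have hop := mulVec_bound N δ hN w
  set a := Real.sqrt (∑ j, (w j)^2) with ha
  set b := Real.sqrt (∑ i, (u i)^2) with hb
  have ha0 : 0 ≤ a := Real.sqrt_nonneg _
  have hb0 : 0 ≤ b := Real.sqrt_nonneg _
  have ha2 : a ^ 2 = ∑ j, (w j)^2 := Real.sq_sqrt (by positivity)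
  have hb2 : b ^ 2 = ∑ i, (u i)^2 := Real.sq_sqrt (by positivity)
  have key : a ^ 2 ≤ b * (δ * a) := by
    rw [ha2]
    exact hS.le.trans (hCS.trans (mul_le_mul_of_nonneg_left hop hb0))
  rcases eq_or_lt_of_le ha0 with h | h
  · rw [← ha2, ← h]; norm_num; positivity
  · have h2 : a ≤ δ * b := by nlinarith
    calc ∑ j, (w j)^2 = a ^ 2 := ha2.symm
      _ ≤ (δ * b) ^ 2 := by nlinarith
      _ = δ ^ 2 * ∑ i, (u i)^2 := by rw [mul_pow, hb2]

/-- orthonormal expansion of squared norm -/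
lemma sum_sq_orthonormal {m q : ℕ} (u : Fin q → (Fin m → ℝ)) (a : Fin q → ℝ)
    (horth : ∀ l l', ∑ i, u l i * u l' i = if l = l' then 1 else 0) :
    ∑ i, (∑ l, a l * u l i) ^ 2 = ∑ l, (a l) ^ 2 := by
  have h1 : ∀ i : Fin m, (∑ l, a l * u l i) ^ 2
      = ∑ l, ∑ l', (a l * a l') * (u l i * u l' i) := by
    intro i
    rw [sq, Finset.sum_mul_sum]
    exact Finset.sum_congr rfl fun l _ => Finset.sum_congr rfl fun l' _ => by ring
  rw [Finset.sum_congr rfl fun i _ => h1 i, Finset.sum_comm]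
  refine Finset.sum_congr rfl fun l _ => ?_
  rw [Finset.sum_comm]
  have h2 : ∀ l', ∑ i, (a l * a l') * (u l i * u l' i)
      = (a l * a l') * (if l = l' then 1 else 0) := by
    intro l'
    rw [← Finset.mul_sum, horth]
  rw [Finset.sum_congr rfl fun l' _ => h2 l']
  simp [sq]

/-- triangle inequality for Frobenius norm -/
lemma frob_add {m n : ℕ} (X Y : Matrix (Fin m) (Fin n) ℝ) :
    Real.sqrt (∑ i, ∑ j, ((X + Y) i j) ^ 2) ≤
      Real.sqrt (∑ i, ∑ j, (X i j) ^ 2) + Real.sqrt (∑ i, ∑ j, (Y i j) ^ 2) := by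
  have key : ∀ Z : Matrix (Fin m) (Fin n) ℝ,
      ‖(WithLp.equiv 2 (Fin m × Fin n → ℝ)).symm (fun p => Z p.1 p.2)‖
        = Real.sqrt (∑ i, ∑ j, (Z i j) ^ 2) := by
    intro Z
    rw [EuclideanSpace.norm_eq]
    congr 1
    simp only [WithLp.equiv_symm_apply, PiLp.toLp_apply, Real.norm_eq_abs, sq_abs]
    exact Fintype.sum_prod_type _
  have hadd : (WithLp.equiv 2 (Fin m × Fin n → ℝ)).symm (fun p => (X + Y) p.1 p.2)
      = (WithLp.equiv 2 (Fin m × Fin n → ℝ)).symm (fun p => X p.1 p.2)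
        + (WithLp.equiv 2 (Fin m × Fin n → ℝ)).symm (fun p => Y p.1 p.2) := rfl
  calc Real.sqrt (∑ i, ∑ j, ((X + Y) i j) ^ 2)
      = ‖(WithLp.equiv 2 (Fin m × Fin n → ℝ)).symm (fun p => (X + Y) p.1 p.2)‖ := (key _).symm
    _ = ‖(WithLp.equiv 2 (Fin m × Fin n → ℝ)).symm (fun p => X p.1 p.2)
        + (WithLp.equiv 2 (Fin m × Fin n → ℝ)).symm (fun p => Y p.1 p.2)‖ := by rw [hadd]
    _ ≤ ‖(WithLp.equiv 2 (Fin m × Fin n → ℝ)).symm (fun p => X p.1 p.2)‖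
        + ‖(WithLp.equiv 2 (Fin m × Fin n → ℝ)).symm (fun p => Y p.1 p.2)‖ := norm_add_le _ _
    _ = _ := by rw [key, key]

end StmtAux

namespace StmtAux
open Module
lemma exists_superspace {V : Type} [NormedAddCommGroup V] [InnerProductSpace ℝ V]
    [FiniteDimensional ℝ V] (k : ℕ) (U : Submodule ℝ V) (h1 : finrank ℝ U ≤ k)
    (h2 : k ≤ finrank ℝ V) : ∃ W : Submodule ℝ V, U ≤ W ∧ finrank ℝ W = k := by
  induction k with
  | zero =>
    refine ⟨⊥, ?_, finrank_bot ℝ V⟩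
    rw [le_bot_iff, ← Submodule.finrank_eq_zero (R := ℝ)]; omega
  | succ k ih =>
    rcases Nat.lt_or_ge (finrank ℝ U) (k+1) with h | h
    · obtain ⟨W, hUW, hWk⟩ := ih (by omega) (by omega)
      have hlt : finrank ℝ W < finrank ℝ V := by omega
      obtain ⟨x, hx⟩ := Submodule.exists_of_finrank_lt W hlt
      have hxW : x ∉ W := fun hm => hx 1 one_ne_zero (by simpa using hm)
      have hx0 : x ≠ 0 := fun h0 => hxW (h0 ▸ W.zero_mem)
      refine ⟨W ⊔ Submodule.span ℝ {x}, hUW.trans le_sup_left, ?_⟩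
      have hle : finrank ℝ ↥(W ⊔ Submodule.span ℝ {x}) ≤ k + 1 := by
        have := Submodule.finrank_add_le_finrank_add_finrank W (Submodule.span ℝ {x})
        rw [finrank_span_singleton hx0] at this; omega
      have hlt2 : W < W ⊔ Submodule.span ℝ {x} := by
        refine lt_of_le_of_ne le_sup_left (fun hEq => hxW ?_)
        rw [hEq]
        exact le_sup_right (b := Submodule.span ℝ {x}) (Submodule.mem_span_singleton_self x)
      have := Submodule.finrank_lt_finrank_of_lt hlt2
      omega
    · exact ⟨U, le_rfl, by omega⟩

end StmtAux

namespace StmtAux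
open Module

/-- Key construction: perturb a rank-`k` approximant of `A` into one of `A + N`. -/
lemma key_lemma {m n k : ℕ} (hk : k ≤ m) (A N : Matrix (Fin m) (Fin n) ℝ) (δ : ℝ)
    (hδ0 : 0 ≤ δ) (hN : specNorm N ≤ δ) (C : Matrix (Fin m) (Fin n) ℝ) (hC : C.rank ≤ k) :
    ∃ C' : Matrix (Fin m) (Fin n) ℝ, C'.rank ≤ k ∧
      Real.sqrt (∑ i, ∑ j, ((A + N - C') i j) ^ 2)
        ≤ Real.sqrt (∑ i, ∑ j, ((A - C) i j) ^ 2) + Real.sqrt ((m : ℝ) - k) * δ := by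
  classical
  set V := EuclideanSpace ℝ (Fin m)
  have hV : finrank ℝ V = m := finrank_euclideanSpace_fin
  set U : Submodule ℝ V := Submodule.span ℝ (Set.range fun j => ev (fun i => C i j)) with hU
  have hUmap : Submodule.map (WithLp.linearEquiv 2 ℝ (Fin m → ℝ)).symm.toLinearMap
      (Submodule.span ℝ (Set.range Cᵀ)) = U := by
    rw [Submodule.map_span, hU]
    congr 1
    exact (Set.range_comp _ _).symm
  have hUrank : finrank ℝ U ≤ k := by
    rw [← hUmap]
    have : C.rank = finrank ℝ (Submodule.map (WithLp.linearEquiv 2 ℝ (Fin m → ℝ)).symm.toLinearMap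
        (Submodule.span ℝ (Set.range Cᵀ))) := by
      rw [Matrix.rank, Matrix.range_mulVecLin]
      exact (LinearEquiv.finrank_map_eq _ _).symm
    rw [← this]
    exact hC
  obtain ⟨W, hUW, hWk⟩ := exists_superspace k U hUrank (by omega)
  have hWo : finrank ℝ Wᗮ = m - k := by
    have := Submodule.finrank_add_finrank_orthogonal (K := W)
    omega
  let b : OrthonormalBasis (Fin (m - k)) ℝ Wᗮ :=
    (stdOrthonormalBasis ℝ Wᗮ).reindex (finCongr hWo)
  set u : Fin (m - k) → (Fin m → ℝ) := fun l i => (b l : V) i with hu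
  have horth : ∀ l l', ∑ i, u l i * u l' i = if l = l' then 1 else 0 := by
    intro l l'
    have h := (orthonormal_iff_ite (𝕜 := ℝ)).1 b.orthonormal l l'
    rw [Submodule.coe_inner, PiLp.inner_apply] at h
    simpa [RCLike.inner_apply, hu, mul_comm] using h
  have hproj : ∀ v : V, (v - ∑ l, (∑ i, u l i * v i) • ((b l : Wᗮ) : V)) ∈ W := by
    intro v
    have h := Submodule.sub_starProjection_mem_orthogonal (K := Wᗮ) v
    rw [Submodule.orthogonal_orthogonal, Submodule.starProjection_apply] at h
    have hps : ((Wᗮ.orthogonalProjectionOnto v : Wᗮ) : V)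
        = ∑ l, (∑ i, u l i * v i) • ((b l : Wᗮ) : V) := by
      rw [b.orthogonalProjectionOnto_apply_eq_sum]
      push_cast
      refine Finset.sum_congr rfl fun l _ => ?_
      have : inner (𝕜 := ℝ) ((b l : Wᗮ) : V) v = ∑ i, u l i * v i := by
        rw [PiLp.inner_apply]
        simp [RCLike.inner_apply, hu]
        exact Finset.sum_congr rfl fun _ _ => mul_comm _ _
      rw [this]
    rwa [hps] at h
  -- the correction matrix
  set c : Fin (m - k) → Fin n → ℝ := fun l j => ∑ p, u l p * N p j with hc
  set D : Matrix (Fin m) (Fin n) ℝ := Matrix.of fun i j => ∑ l, c l j * u l i with hD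
  refine ⟨C + N - D, ?_, ?_⟩
  · -- rank bound
    have hcol : ∀ j, ev (fun i => (C + N - D) i j) ∈ W := by
      intro j
      have h1 : ev (fun i => C i j) ∈ W := hUW (Submodule.subset_span ⟨j, rfl⟩)
      have h2 : ev (fun i => N i j) - ∑ l, (∑ i, u l i * (ev (fun i => N i j)) i) • ((b l : Wᗮ) : V) ∈ W :=
        hproj (ev (fun i => N i j))
      have heq : ev (fun i => (C + N - D) i j)
          = ev (fun i => C i j)
            + (ev (fun i => N i j) - ∑ l, (∑ i, u l i * (ev (fun i => N i j)) i) • ((b l : Wᗮ) : V)) := by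
        apply PiLp.ext
        intro i
        have hsum : (∑ l, (∑ i', u l i' * (ev (fun i'' => N i'' j)) i') • ((b l : Wᗮ) : V)) i
            = ∑ l, c l j * u l i := by
          rw [WithLp.ofLp_sum, Finset.sum_apply]
          refine Finset.sum_congr rfl fun l _ => ?_
          rw [PiLp.smul_apply]
          simp [hc, hu, ev, smul_eq_mul]
        have hL : ev (fun i' => (C + N - D) i' j) i = C i j + N i j - (∑ l, c l j * u l i) := rfl
        have hC1 : ev (fun i' => C i' j) i = C i j := rfl
        have hN1 : ev (fun i' => N i' j) i = N i j := rfl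
        rw [PiLp.add_apply, PiLp.sub_apply, hsum, hL, hC1, hN1]
        ring
      rw [heq]
      exact W.add_mem h1 h2
    have hrank : (C + N - D).rank = finrank ℝ (Submodule.map
        (WithLp.linearEquiv 2 ℝ (Fin m → ℝ)).symm.toLinearMap
        (Submodule.span ℝ (Set.range (C + N - D)ᵀ))) := by
      rw [Matrix.rank, Matrix.range_mulVecLin]
      exact (LinearEquiv.finrank_map_eq _ _).symm
    rw [hrank, ← hWk]
    refine Submodule.finrank_mono ?_
    rw [Submodule.map_span, Submodule.span_le, ← Set.range_comp (f := ((C + N - D)ᵀ : Fin n → Fin m → ℝ))]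
    rintro v ⟨j, rfl⟩
    exact hcol j
  · -- Frobenius bound
    have hABC : A + N - (C + N - D) = (A - C) + D := by abel
    rw [hABC]
    refine (frob_add (A - C) D).trans ?_
    refine add_le_add_right ?_ _
    -- ‖D‖_F ≤ √(m-k) δ
    have hDsum : ∑ i, ∑ j, (D i j) ^ 2 ≤ ((m : ℝ) - k) * δ ^ 2 := by
      rw [Finset.sum_comm]
      have h1 : ∀ j, ∑ i, (D i j) ^ 2 = ∑ l, (c l j) ^ 2 := by
        intro j
        exact sum_sq_orthonormal u (fun l => c l j) horth
      rw [Finset.sum_congr rfl fun j _ => h1 j, Finset.sum_comm]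
      have h2 : ∀ l, ∑ j, (c l j) ^ 2 ≤ δ ^ 2 := by
        intro l
        have := vecMul_bound N δ hδ0 hN (u l)
        have hnorm1 : ∑ i, (u l i) ^ 2 = 1 := by
          have := horth l l
          simpa [sq] using this
        rw [hnorm1, mul_one] at this
        simpa [hc] using this
      calc ∑ l, ∑ j, (c l j) ^ 2 ≤ ∑ l : Fin (m - k), δ ^ 2 :=
            Finset.sum_le_sum fun l _ => h2 l
        _ = (m - k : ℕ) * δ ^ 2 := by simp [mul_comm]
        _ ≤ ((m : ℝ) - k) * δ ^ 2 := by
            have : ((m - k : ℕ) : ℝ) = (m : ℝ) - k := by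
              rw [Nat.cast_sub hk]
            rw [this]
    calc Real.sqrt (∑ i, ∑ j, (D i j) ^ 2) ≤ Real.sqrt (((m : ℝ) - k) * δ ^ 2) :=
          Real.sqrt_le_sqrt hDsum
      _ = Real.sqrt ((m : ℝ) - k) * δ := by
          have hmk : (0:ℝ) ≤ (m : ℝ) - k := by
            have : (k:ℝ) ≤ m := Nat.cast_le.2 hk
            linarith
          rw [Real.sqrt_mul hmk, Real.sqrt_sq hδ0]

end StmtAux

namespace StmtAux

lemma bestErr_bddBelow {m n : ℕ} (A : Matrix (Fin m) (Fin n) ℝ) (k : ℕ) :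
    BddBelow {e : ℝ | ∃ B : Matrix (Fin m) (Fin n) ℝ, B.rank ≤ k ∧
      e = Real.sqrt (∑ i, ∑ j, ((A - B) i j) ^ 2)} :=
  ⟨0, fun _ ⟨_, _, he⟩ => he ▸ Real.sqrt_nonneg _⟩

lemma bestErr_nonempty {m n : ℕ} (A : Matrix (Fin m) (Fin n) ℝ) (k : ℕ) :
    Set.Nonempty {e : ℝ | ∃ B : Matrix (Fin m) (Fin n) ℝ, B.rank ≤ k ∧
      e = Real.sqrt (∑ i, ∑ j, ((A - B) i j) ^ 2)} :=
  ⟨_, 0, by simp, rfl⟩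

lemma bestErr_le {m n k : ℕ} (A C : Matrix (Fin m) (Fin n) ℝ) (hC : C.rank ≤ k) :
    bestErr A k ≤ Real.sqrt (∑ i, ∑ j, ((A - C) i j) ^ 2) :=
  csInf_le (bestErr_bddBelow A k) ⟨C, hC, rfl⟩

lemma bestErr_nonneg {m n : ℕ} (A : Matrix (Fin m) (Fin n) ℝ) (k : ℕ) :
    0 ≤ bestErr A k :=
  le_csInf (bestErr_nonempty A k) fun _ ⟨_, _, he⟩ => he ▸ Real.sqrt_nonneg _

lemma bestErr_exists_lt {m n : ℕ} (A : Matrix (Fin m) (Fin n) ℝ) (k : ℕ) {η : ℝ} (hη : 0 < η) :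
    ∃ C : Matrix (Fin m) (Fin n) ℝ, C.rank ≤ k ∧
      Real.sqrt (∑ i, ∑ j, ((A - C) i j) ^ 2) < bestErr A k + η := by
  have hlt : bestErr A k < bestErr A k + η := by linarith
  obtain ⟨e, ⟨C, hC, he⟩, helt⟩ := exists_lt_of_csInf_lt (bestErr_nonempty A k) hlt
  exact ⟨C, hC, he ▸ helt⟩

end StmtAux

open StmtAux in
/-- Perturbation bound for the best rank-`k` approximation error. -/
theorem stmt_3 {m n k : ℕ} (hmn : m ≤ n) (hk : k < m)
    (A N : Matrix (Fin m) (Fin n) ℝ) (δ ε : ℝ) (hδ0 : 0 ≤ δ) (hε : 0 < ε)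
    (hN : specNorm N ≤ δ) :
    bestErr (A + N) k ≤ bestErr A k + Real.sqrt (((m : ℝ) - k) * δ ^ 2)
        + Real.sqrt (2 * specNorm A * ((m : ℝ) - k) * δ) ∧
    ((δ ≤ ε ^ 2 * (bestErr A k) ^ 2 / (2 * specNorm A * ((m : ℝ) - k)) →
      Real.sqrt ((m : ℝ) - k) * δ ≤ ε * bestErr A k →
      bestErr (A + N) k ≤ (1 + 2 * ε) * bestErr A k)) := by
  have hkm : k ≤ m := hk.le
  have hmk0 : (0:ℝ) ≤ (m : ℝ) - k := by
    have : (k:ℝ) ≤ m := Nat.cast_le.2 hkm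
    linarith
  -- main bound
  have main : bestErr (A + N) k ≤ bestErr A k + Real.sqrt ((m : ℝ) - k) * δ := by
    refine le_of_forall_pos_le_add fun η hη => ?_
    obtain ⟨C, hC, hClt⟩ := bestErr_exists_lt A k hη
    obtain ⟨C', hC'rank, hC'bound⟩ := key_lemma hkm A N δ hδ0 hN C hC
    have h1 : bestErr (A + N) k ≤ Real.sqrt (∑ i, ∑ j, ((A + N - C') i j) ^ 2) :=
      bestErr_le (A + N) C' hC'rank
    have := h1.trans hC'bound
    linarith
  have hsq : Real.sqrt (((m : ℝ) - k) * δ ^ 2) = Real.sqrt ((m : ℝ) - k) * δ := by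
    rw [Real.sqrt_mul hmk0, Real.sqrt_sq hδ0]
  constructor
  · have h3 : 0 ≤ Real.sqrt (2 * specNorm A * ((m : ℝ) - k) * δ) := Real.sqrt_nonneg _
    rw [hsq]
    linarith
  · intro h1 h2
    set b := bestErr A k with hb
    have hb0 : 0 ≤ b := bestErr_nonneg A k
    have hσ0 : 0 ≤ specNorm A := norm_nonneg _
    have harg : 2 * specNorm A * ((m : ℝ) - k) * δ ≤ (ε * b) ^ 2 := by
      set s := 2 * specNorm A * ((m : ℝ) - k) with hs
      have hs0 : 0 ≤ s := by
        rw [hs]; positivity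
      rcases eq_or_lt_of_le hs0 with h | h
      · rw [← h]
        simp
        positivity
      · have := (le_div_iff₀ h).1 h1
        calc s * δ = δ * s := mul_comm _ _
          _ ≤ ε ^ 2 * b ^ 2 := this
          _ = (ε * b) ^ 2 := by ring
    have ht : Real.sqrt (2 * specNorm A * ((m : ℝ) - k) * δ) ≤ ε * b := by
      calc Real.sqrt (2 * specNorm A * ((m : ℝ) - k) * δ) ≤ Real.sqrt ((ε * b) ^ 2) :=
            Real.sqrt_le_sqrt harg
        _ = ε * b := Real.sqrt_sq (by positivity)
    have h2' : Real.sqrt ((m : ℝ) - k) * δ ≤ ε * b := h2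
    have hεb : 0 ≤ ε * b := by positivity
    have : bestErr (A + N) k ≤ b + ε * b + ε * b := by linarith
    linarith [this]
end

section
/- Let A ∈ R^{m×n}, S ∈ R^{n×ℓ}, and let V ∈ R^{n×k} have orthonormal columns with k < ℓ ≤ n. Suppose σ_k(VᵀS) ≥ γ > 0 (so VᵀS has full row rank k). Write E = A − A V Vᵀ. Then ‖A − A S (VᵀS)⁺ Vᵀ‖_F^2 = ‖E S (VᵀS)⁺‖_F^2 + ‖E‖_F^2 ≤ (1 + γ^{-2})·‖E‖_F^2 · max(1, ‖ES‖_F^2/‖E‖_F^2) whenever additionally ‖E S‖_F^2 ≤ ‖E‖_F^2, in which case ‖A − A S (VᵀS)⁺ Vᵀ‖_F^2 ≤ (1 + γ^{-2})‖E‖_F^2. -/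
open Matrix

/-- `Y` is the Moore–Penrose pseudoinverse of `X`. -/
def IsMoorePenrose {a b : ℕ} (X : Matrix (Fin a) (Fin b) ℝ) (Y : Matrix (Fin b) (Fin a) ℝ) : Prop :=
  X * Y * X = X ∧ Y * X * Y = Y ∧ (X * Y)ᵀ = X * Y ∧ (Y * X)ᵀ = Y * X

/-- Squared Frobenius norm of a real matrix. -/
noncomputable def frobSq {α β : Type*} [Fintype α] [Fintype β] (M : Matrix α β ℝ) : ℝ :=
  ∑ i, ∑ j, (M i j) ^ 2

/-- `svals A i` is the `i`-th largest singular value of `A` (0-indexed); `0` out of range. -/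
noncomputable def svals {m n : ℕ} (A : Matrix (Fin m) (Fin n) ℝ) : ℕ → ℝ :=
  fun i =>
    if h : i < n then
      Real.sqrt ((show (Aᵀ * A).IsHermitian by simpa using A.isHermitian_conjTranspose_mul_self).eigenvalues
        (Tuple.sort (fun j => -(show (Aᵀ * A).IsHermitian by simpa using A.isHermitian_conjTranspose_mul_self).eigenvalues j) ⟨i, h⟩))
    else 0

lemma isHermitian_transpose_mul_self {a b : ℕ} (A : Matrix (Fin a) (Fin b) ℝ) :
    (Aᵀ * A).IsHermitian := by
  simpa using A.isHermitian_conjTranspose_mul_self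

lemma frobSq_eq_trace {a b : ℕ} (M : Matrix (Fin a) (Fin b) ℝ) :
    frobSq M = (M * Mᵀ).trace := by
  simp [frobSq, Matrix.trace, Matrix.mul_apply, Matrix.diag, sq]

lemma frobSq_nonneg {a b : ℕ} (M : Matrix (Fin a) (Fin b) ℝ) : 0 ≤ frobSq M := by
  apply Finset.sum_nonneg; intro i _; apply Finset.sum_nonneg; intro j _; positivity


lemma quad_ineq {k l : ℕ} (X : Matrix (Fin k) (Fin l) ℝ) (γ : ℝ)
    (heig : ∀ j, (isHermitian_transpose_mul_self X).eigenvalues j ≠ 0 →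
      γ^2 ≤ (isHermitian_transpose_mul_self X).eigenvalues j)
    (u : Fin l → ℝ) :
    γ^2 * ((X *ᵥ u) ⬝ᵥ (X *ᵥ u)) ≤ (Xᵀ *ᵥ (X *ᵥ u)) ⬝ᵥ (Xᵀ *ᵥ (X *ᵥ u)) := by
  have hB := isHermitian_transpose_mul_self X
  set B := Xᴴ * X with hBdef
  set lam := hB.eigenvalues with hlam
  have hH : Xᴴ = Xᵀ := conjTranspose_eq_transpose_of_trivial X
  have hpsd : PosSemidef (B * B - γ^2 • B) := by
    set U : Matrix (Fin l) (Fin l) ℝ := (hB.eigenvectorUnitary : Matrix (Fin l) (Fin l) ℝ) with hU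
    have hspec : B = U * diagonal lam * star U := by
      have := hB.spectral_theorem
      rw [hBdef, hH]; exact this
    have hUU : star U * U = 1 := Matrix.UnitaryGroup.star_mul_self _
    have hdd : B * B - γ^2 • B
        = U * diagonal (fun j => lam j * lam j - γ^2 * lam j) * star U := by
      have h1 : B * B = U * (diagonal lam * diagonal lam) * star U := by
        rw [hspec]
        simp only [Matrix.mul_assoc]
        rw [← Matrix.mul_assoc (star U) U, hUU, Matrix.one_mul]
      have h2 : γ^2 • B = U * (γ^2 • diagonal lam) * star U := by
        rw [hspec, Matrix.mul_smul, Matrix.smul_mul]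
      rw [h1, h2, ← Matrix.sub_mul, ← Matrix.mul_sub, Matrix.diagonal_mul_diagonal,
        ← Matrix.diagonal_smul, ← Matrix.diagonal_sub]
      congr 2
    rw [hdd]
    have : PosSemidef (diagonal (fun j => lam j * lam j - γ^2 * lam j)) := by
      rw [posSemidef_diagonal_iff]
      intro j
      rcases eq_or_ne (lam j) 0 with h0 | h0
      · simp [h0]
      · have := heig j h0
        nlinarith
    exact this.mul_mul_conjTranspose_same U
  have h0 := hpsd.dotProduct_mulVec_nonneg u
  simp only [star_trivial] at h0
  have hexp : u ⬝ᵥ ((B * B - γ^2 • B) *ᵥ u)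
      = (Xᵀ *ᵥ (X *ᵥ u)) ⬝ᵥ (Xᵀ *ᵥ (X *ᵥ u)) - γ^2 * ((X *ᵥ u) ⬝ᵥ (X *ᵥ u)) := by
    rw [Matrix.sub_mulVec, dotProduct_sub, Matrix.smul_mulVec,
      dotProduct_smul, hBdef, hH]
    have e1 : u ⬝ᵥ ((Xᵀ * X) *ᵥ u) = (X *ᵥ u) ⬝ᵥ (X *ᵥ u) := by
      rw [← Matrix.mulVec_mulVec, Matrix.dotProduct_mulVec, Matrix.vecMul_transpose]
    have e2 : u ⬝ᵥ ((Xᵀ * X * (Xᵀ * X)) *ᵥ u)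
        = (Xᵀ *ᵥ (X *ᵥ u)) ⬝ᵥ (Xᵀ *ᵥ (X *ᵥ u)) := by
      rw [← Matrix.mulVec_mulVec, ← Matrix.mulVec_mulVec, ← Matrix.mulVec_mulVec,
        Matrix.dotProduct_mulVec, Matrix.vecMul_transpose, Matrix.dotProduct_mulVec,
        ← Matrix.mulVec_transpose]
    rw [e1, e2, smul_eq_mul]
  rw [hexp] at h0
  linarith

lemma dot_self_nonneg {l : ℕ} (v : Fin l → ℝ) : 0 ≤ v ⬝ᵥ v :=
  Finset.sum_nonneg fun i _ => mul_self_nonneg _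

lemma vec_bound {k l : ℕ} (X : Matrix (Fin k) (Fin l) ℝ) (Y : Matrix (Fin l) (Fin k) ℝ)
    (hY : X * Y * X = X ∧ Y * X * Y = Y ∧ (X * Y)ᵀ = X * Y ∧ (Y * X)ᵀ = Y * X)
    (γ : ℝ)
    (heig : ∀ j, (isHermitian_transpose_mul_self X).eigenvalues j ≠ 0 →
      γ^2 ≤ (isHermitian_transpose_mul_self X).eigenvalues j)
    (v : Fin l → ℝ) :
    γ^2 * ((v ᵥ* Y) ⬝ᵥ (v ᵥ* Y)) ≤ v ⬝ᵥ v := by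
  set w := v ᵥ* Y with hw
  set p := v ᵥ* (Y * X) with hp
  have hwX : w ᵥ* X = p := by rw [hw, hp, Matrix.vecMul_vecMul]
  have hPP : (Y*X)*(Y*X) = Y*X := by rw [← Matrix.mul_assoc, hY.2.1]
  have hpmv : p = (Y*X) *ᵥ v := by
    rw [hp, ← Matrix.mulVec_transpose, hY.2.2.2]
  have hvp : v ⬝ᵥ p = p ⬝ᵥ p := by
    have h1 : p ⬝ᵥ p = v ⬝ᵥ ((Y*X) *ᵥ p) := by
      rw [Matrix.dotProduct_mulVec, hp]
    rw [h1, hpmv, Matrix.mulVec_mulVec, hPP]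
  have hCS : (v ⬝ᵥ p)^2 ≤ (v ⬝ᵥ v) * (p ⬝ᵥ p) := by
    simpa [dotProduct, sq] using
      Finset.sum_mul_sq_le_sq_mul_sq Finset.univ v p
  have hple : p ⬝ᵥ p ≤ v ⬝ᵥ v := by
    have h0p := dot_self_nonneg p
    have h0v := dot_self_nonneg v
    nlinarith [hCS, hvp]
  have hXYw : (X*Y) *ᵥ w = w := by
    conv_lhs => rw [← hY.2.2.1]
    rw [Matrix.mulVec_transpose, hw, Matrix.vecMul_vecMul, ← Matrix.mul_assoc, hY.2.1]
  have hq := quad_ineq X γ heig (Y *ᵥ w)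
  rw [Matrix.mulVec_mulVec, hXYw] at hq
  have hXtw : Xᵀ *ᵥ w = p := by rw [Matrix.mulVec_transpose, hwX]
  rw [hXtw] at hq
  calc γ^2 * (w ⬝ᵥ w) ≤ p ⬝ᵥ p := hq
    _ ≤ v ⬝ᵥ v := hple

lemma XY_one {k l : ℕ} (X : Matrix (Fin k) (Fin l) ℝ) (Y : Matrix (Fin l) (Fin k) ℝ)
    (hYX : X * Y * X = X) (hrk : X.rank = k) : X * Y = 1 := by
  have hsurj : Function.Surjective X.mulVecLin := by
    rw [← LinearMap.range_eq_top]
    apply Submodule.eq_top_of_finrank_eq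
    have : Module.finrank ℝ ↥(LinearMap.range X.mulVecLin) = X.rank := rfl
    rw [this, hrk]
    simp
  ext i j
  obtain ⟨u, hu⟩ := hsurj (Pi.single j 1)
  rw [Matrix.mulVecLin_apply] at hu
  have h1 : (X * Y) *ᵥ Pi.single j 1 = Pi.single j 1 := by
    rw [← hu, Matrix.mulVec_mulVec, hYX]
  have h2 := congrFun h1 i
  simp only [Matrix.mulVec_single, mul_one] at h2
  have h3 : (X * Y) i j = (Pi.single j (1:ℝ) : Fin k → ℝ) i := by simpa using h2
  rw [h3]
  simp [Pi.single_apply, Matrix.one_apply, eq_comm]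

lemma eig_facts {k l : ℕ} (hkl : k < l) (X : Matrix (Fin k) (Fin l) ℝ) (γ : ℝ) (hγ : 0 < γ)
    (hσ : γ ≤ svals X (k-1)) :
    (∀ j, (isHermitian_transpose_mul_self X).eigenvalues j ≠ 0 →
      γ^2 ≤ (isHermitian_transpose_mul_self X).eigenvalues j) ∧ X.rank = k := by
  set hB := isHermitian_transpose_mul_self X with hhB
  set lam := hB.eigenvalues with hlam
  set σ := Tuple.sort (fun j => -lam j) with hσdef
  have hk1l : k - 1 < l := lt_of_le_of_lt (Nat.sub_le k 1) hkl
  have hγ2 : γ^2 ≤ lam (σ ⟨k-1, hk1l⟩) := by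
    have h' : γ ≤ Real.sqrt (lam (σ ⟨k-1, hk1l⟩)) := by
      have := hσ
      rw [svals, dif_pos hk1l] at this
      exact this
    exact (Real.le_sqrt' hγ).mp h'
  have hpos : ∀ i : Fin l, (i : ℕ) < k → γ^2 ≤ lam (σ i) := by
    intro i hi
    have hmono := Tuple.monotone_sort (fun j => -lam j)
    have hle : i ≤ (⟨k-1, hk1l⟩ : Fin l) := Fin.mk_le_mk.mpr (by omega)
    have h2 := hmono hle
    simp only [Function.comp_apply] at h2
    have h3 : lam (σ ⟨k-1, hk1l⟩) ≤ lam (σ i) := by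
      simpa [hσdef] using neg_le_neg_iff.mp (by simpa [hσdef] using h2)
    linarith
  have hrank_eq : X.rank = (Finset.univ.filter (fun j => lam j ≠ 0)).card := by
    rw [← Matrix.rank_conjTranspose_mul_self X, conjTranspose_eq_transpose_of_trivial, hB.rank_eq_card_non_zero_eigs,
      Fintype.card_subtype]
  have hinj : Function.Injective σ := σ.injective
  set T : Finset (Fin l) := Finset.univ.filter (fun j => lam j ≠ 0) with hT
  set Sk : Finset (Fin l) := (Finset.univ.filter (fun i : Fin l => (i:ℕ) < k)).image σ with hSk
  have hSkT : Sk ⊆ T := by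
    intro j hj
    rw [hSk, Finset.mem_image] at hj
    obtain ⟨i, hi, rfl⟩ := hj
    rw [Finset.mem_filter] at hi
    have := hpos i hi.2
    rw [hT, Finset.mem_filter]
    refine ⟨Finset.mem_univ _, by nlinarith⟩
  have hfiltcard : (Finset.univ.filter (fun i : Fin l => (i:ℕ) < k)).card = k := by
    have himg : Finset.univ.filter (fun i : Fin l => (i:ℕ) < k)
        = Finset.univ.image (Fin.castLE hkl.le) := by
      ext j
      simp only [Finset.mem_filter, Finset.mem_univ, true_and, Finset.mem_image]
      constructor
      · intro hj; exact ⟨⟨j, hj⟩, rfl⟩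
      · rintro ⟨i, rfl⟩; exact i.2
    rw [himg, Finset.card_image_of_injective _ (Fin.castLE_injective hkl.le)]
    simp
  have hSkcard : Sk.card = k := by
    rw [hSk, Finset.card_image_of_injective _ hinj, hfiltcard]
  have hrank_le : X.rank ≤ k := X.rank_le_height
  have hcardT : T.card ≤ k := by rw [← hrank_eq] at *; exact hrank_le
  have hkT : k ≤ T.card := hSkcard ▸ Finset.card_le_card hSkT
  have hrk : X.rank = k := le_antisymm hrank_le (hkT.trans (hrank_eq ▸ le_refl _) |>.trans_eq hrank_eq.symm)
  refine ⟨?_, hrk⟩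
  intro j hj
  by_contra hlt
  push_neg at hlt
  have hjT : j ∈ T := by rw [hT, Finset.mem_filter]; exact ⟨Finset.mem_univ _, hj⟩
  have hjSk : j ∉ Sk := by
    intro hjin
    rw [hSk, Finset.mem_image] at hjin
    obtain ⟨i, hi, rfl⟩ := hjin
    rw [Finset.mem_filter] at hi
    exact absurd (hpos i hi.2) (not_le.mpr hlt)
  have : (insert j Sk).card ≤ T.card :=
    Finset.card_le_card (Finset.insert_subset hjT hSkT)
  rw [Finset.card_insert_of_notMem hjSk, hSkcard] at this
  omega

lemma frob_mul_bound {m k l : ℕ} (X : Matrix (Fin k) (Fin l) ℝ) (Y : Matrix (Fin l) (Fin k) ℝ)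
    (hY : X * Y * X = X ∧ Y * X * Y = Y ∧ (X * Y)ᵀ = X * Y ∧ (Y * X)ᵀ = Y * X)
    (γ : ℝ) (hγ : 0 < γ)
    (heig : ∀ j, (isHermitian_transpose_mul_self X).eigenvalues j ≠ 0 →
      γ^2 ≤ (isHermitian_transpose_mul_self X).eigenvalues j)
    (M : Matrix (Fin m) (Fin l) ℝ) :
    frobSq (M * Y) ≤ γ⁻¹^2 * frobSq M := by
  have key : γ^2 * frobSq (M * Y) ≤ frobSq M := by
    rw [frobSq, frobSq, Finset.mul_sum]
    apply Finset.sum_le_sum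
    intro i _
    have hvb := vec_bound X Y hY γ heig (M i)
    have e1 : ∑ j, (M * Y) i j ^ 2 = ((M i) ᵥ* Y) ⬝ᵥ ((M i) ᵥ* Y) := by
      simp [Matrix.mul_apply, Matrix.vecMul, dotProduct, sq]
    have e2 : ∑ j, M i j ^ 2 = (M i) ⬝ᵥ (M i) := by
      simp [dotProduct, sq]
    rw [e1, e2]
    exact hvb
  have hinv : (0:ℝ) ≤ γ⁻¹^2 := by positivity
  calc frobSq (M * Y) = γ⁻¹^2 * (γ^2 * frobSq (M * Y)) := by
        field_simp
    _ ≤ γ⁻¹^2 * frobSq M := mul_le_mul_of_nonneg_left key hinv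

/-- With `E = A - A V Vᵀ`, `σ_k(VᵀS) ≥ γ > 0` and `Y = (VᵀS)⁺`:
`‖A - A S (VᵀS)⁺ Vᵀ‖_F² = ‖E S (VᵀS)⁺‖_F² + ‖E‖_F²`, and if additionally
`‖E S‖_F² ≤ ‖E‖_F²`, then `‖A - A S (VᵀS)⁺ Vᵀ‖_F² ≤ (1 + γ⁻²)‖E‖_F²`. -/
theorem stmt_11 {m n l k : ℕ} (hkl : k < l) (hln : l ≤ n)
    (A : Matrix (Fin m) (Fin n) ℝ) (S : Matrix (Fin n) (Fin l) ℝ)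
    (V : Matrix (Fin n) (Fin k) ℝ) (hV : Vᵀ * V = 1)
    (γ : ℝ) (hγ : 0 < γ) (hσ : γ ≤ svals (Vᵀ * S) (k - 1))
    (Y : Matrix (Fin l) (Fin k) ℝ) (hY : IsMoorePenrose (Vᵀ * S) Y) :
    frobSq (A - A * S * Y * Vᵀ) =
        frobSq ((A - A * V * Vᵀ) * S * Y) + frobSq (A - A * V * Vᵀ) ∧
    (frobSq ((A - A * V * Vᵀ) * S) ≤ frobSq (A - A * V * Vᵀ) →
      frobSq (A - A * S * Y * Vᵀ) ≤ (1 + γ⁻¹ ^ 2) * frobSq (A - A * V * Vᵀ)) := by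
  obtain ⟨heig, hrk⟩ := eig_facts hkl (Vᵀ * S) γ hγ hσ
  have hXY : (Vᵀ * S) * Y = 1 := XY_one _ _ hY.1 hrk
  set E := A - A * V * Vᵀ with hE
  set C := E * S * Y with hC
  have hEV : E * V = 0 := by
    rw [hE, Matrix.sub_mul, Matrix.mul_assoc (A*V) Vᵀ V, hV, Matrix.mul_one, sub_self]
  have hAVX : A * V * Vᵀ * S * Y = A * V := by
    rw [Matrix.mul_assoc (A*V) Vᵀ S, Matrix.mul_assoc (A*V) (Vᵀ*S) Y, hXY, Matrix.mul_one]
  have hid : A - A * S * Y * Vᵀ = E - C * Vᵀ := by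
    rw [hC, hE, Matrix.sub_mul, Matrix.sub_mul, hAVX, Matrix.sub_mul]
    abel
  have hpyth : frobSq (E - C * Vᵀ) = frobSq C + frobSq E := by
    have hVC : E * (V * Cᵀ) = 0 := by rw [← Matrix.mul_assoc, hEV, Matrix.zero_mul]
    have hCV : C * Vᵀ * Eᵀ = 0 := by
      rw [Matrix.mul_assoc, ← Matrix.transpose_mul, hEV, Matrix.transpose_zero, Matrix.mul_zero]
    have hCC : C * Vᵀ * (V * Cᵀ) = C * Cᵀ := by
      rw [Matrix.mul_assoc, ← Matrix.mul_assoc Vᵀ V Cᵀ, hV, Matrix.one_mul]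
    have h1 : (E - C * Vᵀ) * (E - C * Vᵀ)ᵀ = E * Eᵀ + C * Cᵀ := by
      rw [Matrix.transpose_sub, Matrix.transpose_mul, Matrix.transpose_transpose,
        Matrix.sub_mul, Matrix.mul_sub, Matrix.mul_sub, hVC, hCC, hCV]
      rw [sub_zero, zero_sub, sub_neg_eq_add]
    rw [frobSq_eq_trace, frobSq_eq_trace, frobSq_eq_trace, h1, Matrix.trace_add, add_comm]
  have heq : frobSq (A - A * S * Y * Vᵀ) = frobSq C + frobSq E := by rw [hid, hpyth]
  refine ⟨heq, ?_⟩
  intro hES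
  rw [heq]
  have hbound : frobSq C ≤ γ⁻¹^2 * frobSq (E * S) := by
    rw [hC]
    exact frob_mul_bound (Vᵀ * S) Y hY γ hγ heig (E * S)
  have hmono : γ⁻¹^2 * frobSq (E * S) ≤ γ⁻¹^2 * frobSq E :=
    mul_le_mul_of_nonneg_left hES (by positivity)
  have := frobSq_nonneg E
  nlinarith [hbound, hmono]
end
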